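/- For every continuous map f : X → Y of compact Hausdorff spaces and every idempotent probability measure μ on X, the support of the pushforward equals the image of the support: supp(I(f)(μ)) = f(supp μ). -/

import Mathlib

/-- `μ : C(X, ℝ) → ℝ` is an idempotent probability measure. -/
def IsIPM {X : Type*} [TopologicalSpace X] (μ : C(X, ℝ) → ℝ) : Prop :=
  (∀ c : ℝ, μ (ContinuousMap.const X c) = c) ∧
  (∀ (φ : C(X, ℝ)) (c : ℝ), μ (φ + ContinuousMap.const X c) = μ φ + c) ∧
  (∀ φ ψ : C(X, ℝ), μ (φ ⊔ ψ) = max (μ φ) (μ ψ))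

/-- `μ` is supported on the set `F`. -/
def IPMSupportedOn {X : Type*} [TopologicalSpace X] (μ : C(X, ℝ) → ℝ) (F : Set X) : Prop :=
  ∀ φ ψ : C(X, ℝ), (∀ x ∈ F, φ x = ψ x) → μ φ = μ ψ

/-- The support of `μ`. -/
def IPMsupport {X : Type*} [TopologicalSpace X] (μ : C(X, ℝ) → ℝ) : Set X :=
  ⋂₀ {F : Set X | IsClosed F ∧ IPMSupportedOn μ F}

/-- The pushforward `I(f)`. -/
def IPMmap {X Y : Type*} [TopologicalSpace X] [TopologicalSpace Y]
    (f : C(X, Y)) (μ : C(X, ℝ) → ℝ) : C(Y, ℝ) → ℝ :=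
  fun ψ => μ (ψ.comp f)

/-- The max-plus combination `α⊙μ₁ ⊕ β⊙μ₂`. -/
def mpComb {X : Type*} [TopologicalSpace X] (α β : ℝ) (μ₁ μ₂ : C(X, ℝ) → ℝ) :
    C(X, ℝ) → ℝ :=
  fun φ => max (α + μ₁ φ) (β + μ₂ φ)

/-- The Dirac measure `δ_x`. -/
def IPMdirac {X : Type*} [TopologicalSpace X] (x : X) : C(X, ℝ) → ℝ := fun φ => φ x

/-- `μ` is a finitely supported idempotent probability measure of the form
`λ₁⊙δ_{x₁} ⊕ … ⊕ λ_s⊙δ_{x_s}` with all the points `xᵢ` in `Y`. -/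
def IsFinSuppIPM {X : Type*} [TopologicalSpace X] (Y : Set X) (μ : C(X, ℝ) → ℝ) : Prop :=
  ∃ (n : ℕ) (x : Fin (n + 1) → X) (lam : Fin (n + 1) → ℝ),
    (∀ i, x i ∈ Y) ∧
    Finset.univ.sup' Finset.univ_nonempty lam = 0 ∧
    μ = fun φ => Finset.univ.sup' Finset.univ_nonempty fun i => lam i + φ (x i)

/-- `I_β(X)`: idempotent probability measures on `βX` with support in (the image of) `X`. -/
def IBeta (X : Type*) [TopologicalSpace X] : Set (C(StoneCech X, ℝ) → ℝ) :=
  {μ | IsIPM μ ∧ IPMsupport μ ⊆ Set.range (stoneCechUnit : X → StoneCech X)}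

open Set

section Aux

variable {X : Type*} [TopologicalSpace X]

lemma ipm_mono {μ : C(X, ℝ) → ℝ} (hμ : IsIPM μ) {φ ψ : C(X, ℝ)} (h : φ ≤ ψ) :
    μ φ ≤ μ ψ := by
  have h2 := hμ.2.2 φ ψ
  rw [sup_eq_right.mpr h] at h2
  rw [h2]
  exact le_max_left _ _

lemma forall_abs_le_imp_eq {a b : ℝ} (h : ∀ ε > 0, |a - b| ≤ ε) : a = b := by
  by_contra hne
  have h1 : 0 < |a - b| := abs_pos.mpr (sub_ne_zero.mpr hne)
  have := h (|a - b| / 2) (by linarith)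
  linarith

lemma real_le_of_forall_pos {a b : ℝ} (h : ∀ ε > 0, a ≤ b + ε) : a ≤ b := by
  by_contra hlt
  push_neg at hlt
  have := h ((a - b) / 2) (by linarith)
  linarith

/-- The sandwich lemma: if `μ` is supported on `F` and `|φ - ψ| ≤ ε` on `F`,
then `|μ φ - μ ψ| ≤ ε`. -/
lemma ipm_sandwich {μ : C(X, ℝ) → ℝ} (hμ : IsIPM μ) {F : Set X}
    (hF : IPMSupportedOn μ F) {φ ψ : C(X, ℝ)} {ε : ℝ} (hε : 0 ≤ ε)
    (h : ∀ x ∈ F, |φ x - ψ x| ≤ ε) : |μ φ - μ ψ| ≤ ε := by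
  set χ : C(X, ℝ) := (φ ⊔ (ψ + ContinuousMap.const X (-ε))) ⊓ (ψ + ContinuousMap.const X ε)
    with hχ
  have hχφ : ∀ x ∈ F, χ x = φ x := by
    intro x hx
    have hb := h x hx
    rw [abs_sub_le_iff] at hb
    simp only [hχ, ContinuousMap.inf_apply, ContinuousMap.sup_apply, ContinuousMap.add_apply,
      ContinuousMap.const_apply]
    rw [max_eq_left (by linarith), min_eq_left (by linarith)]
  have h1 : μ χ = μ φ := hF χ φ hχφ
  have h2 : μ χ ≤ μ ψ + ε := by
    have hle : χ ≤ ψ + ContinuousMap.const X ε := inf_le_right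
    calc μ χ ≤ μ (ψ + ContinuousMap.const X ε) := ipm_mono hμ hle
      _ = μ ψ + ε := hμ.2.1 _ _
  have h3 : μ ψ + (-ε) ≤ μ χ := by
    have hle : ψ + ContinuousMap.const X (-ε) ≤ χ := by
      refine le_inf le_sup_right ?_
      intro x
      show ψ x + (-ε) ≤ ψ x + ε
      linarith
    calc μ ψ + (-ε) = μ (ψ + ContinuousMap.const X (-ε)) := (hμ.2.1 _ _).symm
      _ ≤ μ χ := ipm_mono hμ hle
  rw [← h1, abs_sub_le_iff]
  constructor <;> linarith

lemma ipm_supported_univ {μ : C(X, ℝ) → ℝ} : IPMSupportedOn μ (univ : Set X) := by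
  intro φ ψ h
  have : φ = ψ := ContinuousMap.ext fun x => h x (mem_univ x)
  rw [this]

lemma ipm_supported_inter [CompactSpace X] [T2Space X] {μ : C(X, ℝ) → ℝ} (hμ : IsIPM μ)
    {F G : Set X} (hFc : IsClosed F) (hGc : IsClosed G)
    (hF : IPMSupportedOn μ F) (hG : IPMSupportedOn μ G) :
    IPMSupportedOn μ (F ∩ G) := by
  intro φ ψ heq
  refine forall_abs_le_imp_eq ?_
  intro ε hε
  set D : Set X := F ∩ {x | ε ≤ |φ x - ψ x|} with hD
  have hDc : IsClosed D :=
    hFc.inter (isClosed_le continuous_const (φ.continuous.sub ψ.continuous).abs)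
  have hdisj : Disjoint D G := by
    rw [Set.disjoint_left]
    rintro x ⟨hxF, hxC⟩ hxG
    have : φ x = ψ x := heq x ⟨hxF, hxG⟩
    simp only [mem_setOf_eq, this, sub_self, abs_zero] at hxC
    linarith
  obtain ⟨g, hg0, hg1, hg01⟩ := exists_continuous_zero_one_of_isClosed hDc hGc hdisj
  set χ : C(X, ℝ) := φ + g * (ψ - φ) with hχ
  have hχG : ∀ x ∈ G, χ x = ψ x := by
    intro x hx
    have : g x = 1 := hg1 hx
    simp [hχ, this]
  have h1 : μ χ = μ ψ := hG χ ψ hχG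
  have h2 : ∀ x ∈ F, |χ x - φ x| ≤ ε := by
    intro x hx
    have hval : χ x - φ x = g x * (ψ x - φ x) := by simp [hχ]
    by_cases hx' : ε ≤ |φ x - ψ x|
    · have : g x = 0 := hg0 ⟨hx, hx'⟩
      rw [hval, this]
      simpa using hε.le
    · push_neg at hx'
      have hg := hg01 x
      rw [hval, abs_mul, abs_of_nonneg hg.1]
      have h1' : |ψ x - φ x| = |φ x - ψ x| := abs_sub_comm _ _
      nlinarith [hg.1, hg.2, abs_nonneg (ψ x - φ x)]
  have := ipm_sandwich hμ hF hε.le h2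
  rw [h1] at this
  rw [abs_sub_comm]
  exact this

/-- `μ` is supported on its support (compactness argument). -/
lemma ipm_supported_supp [CompactSpace X] [T2Space X] {μ : C(X, ℝ) → ℝ} (hμ : IsIPM μ) :
    IPMSupportedOn μ (IPMsupport μ) := by
  intro φ ψ heq
  refine forall_abs_le_imp_eq ?_
  intro ε hε
  classical
  set C : Set X := {x | ε ≤ |φ x - ψ x|} with hC
  have hCc : IsClosed C := isClosed_le continuous_const (φ.continuous.sub ψ.continuous).abs
  set ι := {F : Set X // IsClosed F ∧ IPMSupportedOn μ F} with hι
  have hempty : ((univ : Set X) ∩ ⋂ i : ι, (i.1 ∩ C)) = ∅ := by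
    rw [Set.eq_empty_iff_forall_notMem]
    rintro x ⟨-, hx⟩
    rw [Set.mem_iInter] at hx
    have hxsupp : x ∈ IPMsupport μ := by
      rw [IPMsupport, Set.mem_sInter]
      intro F hF
      exact (hx ⟨F, hF⟩).1
    have hxC : x ∈ C := (hx ⟨univ, isClosed_univ, ipm_supported_univ⟩).2
    have : φ x = ψ x := heq x hxsupp
    simp only [hC, mem_setOf_eq, this, sub_self, abs_zero] at hxC
    linarith
  obtain ⟨t, ht⟩ := isCompact_univ.elim_finite_subfamily_closed (fun i : ι => i.1 ∩ C)
    (fun i => i.2.1.inter hCc) hempty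
  have hFstar : ∀ s : Finset ι,
      IPMSupportedOn μ (⋂ i ∈ s, (i : ι).1) ∧ IsClosed (⋂ i ∈ s, (i : ι).1) := by
    intro s
    induction s using Finset.induction_on with
    | empty =>
      have he : (⋂ i ∈ (∅ : Finset ι), (i : ι).1) = Set.univ := by simp
      rw [he]
      exact ⟨ipm_supported_univ, isClosed_univ⟩
    | insert a s hnm ih =>
      rw [Finset.set_biInter_insert]
      exact ⟨ipm_supported_inter hμ a.2.1 ih.2 a.2.2 ih.1,
        a.2.1.inter ih.2⟩
  have hbound : ∀ x ∈ ⋂ i ∈ t, (i : ι).1, |φ x - ψ x| ≤ ε := by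
    intro x hx
    by_contra hgt
    push_neg at hgt
    have hxC : x ∈ C := le_of_lt hgt
    have : x ∈ (univ : Set X) ∩ ⋂ i ∈ t, ((i : ι).1 ∩ C) := by
      refine ⟨mem_univ x, ?_⟩
      rw [Set.mem_iInter₂]
      intro i hi
      rw [Set.mem_iInter₂] at hx
      exact ⟨hx i hi, hxC⟩
    rw [ht] at this
    exact this
  exact ipm_sandwich hμ (hFstar t).1 hε.le hbound

lemma ipm_map_isIPM {Y : Type*} [TopologicalSpace Y] (f : C(X, Y)) {μ : C(X, ℝ) → ℝ}
    (hμ : IsIPM μ) : IsIPM (IPMmap f μ) := by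
  refine ⟨fun c => ?_, fun ψ c => ?_, fun ψ₁ ψ₂ => ?_⟩
  · show μ ((ContinuousMap.const Y c).comp f) = c
    have : (ContinuousMap.const Y c).comp f = ContinuousMap.const X c := by ext x; rfl
    rw [this]; exact hμ.1 c
  · show μ ((ψ + ContinuousMap.const Y c).comp f) = μ (ψ.comp f) + c
    have : (ψ + ContinuousMap.const Y c).comp f = ψ.comp f + ContinuousMap.const X c := by
      ext x; rfl
    rw [this]; exact hμ.2.1 _ _
  · show μ ((ψ₁ ⊔ ψ₂).comp f) = max (μ (ψ₁.comp f)) (μ (ψ₂.comp f))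
    have : (ψ₁ ⊔ ψ₂).comp f = ψ₁.comp f ⊔ ψ₂.comp f := by
      ext x
      simp [ContinuousMap.sup_apply]
    rw [this]; exact hμ.2.2 _ _

lemma ipm_key {Y : Type*} [CompactSpace X] [T2Space X]
    [TopologicalSpace Y] [CompactSpace Y] [T2Space Y]
    (f : C(X, Y)) {μ : C(X, ℝ) → ℝ} (hμ : IsIPM μ) {G : Set Y} (hGc : IsClosed G)
    (hG : IPMSupportedOn (IPMmap f μ) G) :
    IPMSupportedOn μ (f ⁻¹' G) := by
  have main : ∀ φ₁ φ₂ : C(X, ℝ), (∀ x ∈ f ⁻¹' G, φ₁ x = φ₂ x) → μ φ₁ ≤ μ φ₂ := by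
    intro φ₁ φ₂ heq
    refine real_le_of_forall_pos ?_
    intro ε hε
    set D : Set X := {x | ε ≤ |φ₁ x - φ₂ x|} with hD
    have hDclosed : IsClosed D :=
      isClosed_le continuous_const (φ₁.continuous.sub φ₂.continuous).abs
    have hKc : IsClosed (f '' D) := (hDclosed.isCompact.image f.continuous).isClosed
    have hdisj : Disjoint (f '' D) G := by
      rw [Set.disjoint_left]
      rintro y ⟨x, hxD, rfl⟩ hyG
      have : φ₁ x = φ₂ x := heq x hyG
      simp only [hD, mem_setOf_eq, this, sub_self, abs_zero] at hxD
      linarith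
    obtain ⟨g, hg0, hg1, hg01⟩ := exists_continuous_zero_one_of_isClosed hKc hGc hdisj
    set B : ℝ := ‖φ₁‖ with hB
    set c : ℝ := μ φ₂ + ε - B with hc
    set κ : C(Y, ℝ) := c • g with hκ
    have hκG : ∀ y ∈ G, κ y = c := by
      intro y hy
      have : g y = 1 := hg1 hy
      simp [hκ, this]
    have hνκ : μ (κ.comp f) = c := by
      have h1 : IPMmap f μ κ = IPMmap f μ (ContinuousMap.const Y c) :=
        hG κ _ (fun y hy => by simp [hκG y hy])
      have h2 : IPMmap f μ (ContinuousMap.const Y c) = c := (ipm_map_isIPM f hμ).1 c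
      exact h1.trans h2
    have hle : φ₁ ≤ (κ.comp f + ContinuousMap.const X B) ⊔ (φ₂ + ContinuousMap.const X ε) := by
      rw [ContinuousMap.le_def]
      intro x
      rw [ContinuousMap.sup_apply]
      simp only [ContinuousMap.add_apply, ContinuousMap.const_apply, ContinuousMap.comp_apply]
      by_cases hx : x ∈ D
      · have hgx : g (f x) = 0 := hg0 (mem_image_of_mem f hx)
        have hκx : κ (f x) = 0 := by simp [hκ, hgx]
        have hφB : φ₁ x ≤ B := le_trans (le_abs_self _) (φ₁.norm_coe_le_norm x)
        exact le_max_of_le_left (by rw [hκx]; linarith)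
      · simp only [hD, mem_setOf_eq, not_le] at hx
        have h' : φ₁ x - φ₂ x ≤ |φ₁ x - φ₂ x| := le_abs_self _
        exact le_max_of_le_right (by linarith)
    calc μ φ₁ ≤ μ ((κ.comp f + ContinuousMap.const X B) ⊔ (φ₂ + ContinuousMap.const X ε)) :=
          ipm_mono hμ hle
      _ = max (μ (κ.comp f + ContinuousMap.const X B)) (μ (φ₂ + ContinuousMap.const X ε)) :=
          hμ.2.2 _ _
      _ = max (μ (κ.comp f) + B) (μ φ₂ + ε) := by rw [hμ.2.1, hμ.2.1]
      _ = max (c + B) (μ φ₂ + ε) := by rw [hνκ]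
      _ = μ φ₂ + ε := by rw [hc]; ring_nf; exact max_self _
  intro φ ψ h
  exact le_antisymm (main φ ψ h) (main ψ φ fun x hx => (h x hx).symm)

end Aux

/-- `supp (I(f)(μ)) = f (supp μ)`. -/
theorem ipm_support_map {X Y : Type*} [TopologicalSpace X] [CompactSpace X]
    [T2Space X] [TopologicalSpace Y] [CompactSpace Y] [T2Space Y]
    (f : C(X, Y)) (μ : C(X, ℝ) → ℝ) (hμ : IsIPM μ) :
    IPMsupport (IPMmap f μ) = f '' IPMsupport μ := by
  have hν : IsIPM (IPMmap f μ) := ipm_map_isIPM f hμ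
  have hSclosed : IsClosed (IPMsupport μ) := isClosed_sInter fun F hF => hF.1
  have hPart1 : IPMSupportedOn μ (IPMsupport μ) := ipm_supported_supp hμ
  have himage_closed : IsClosed (f '' IPMsupport μ) :=
    (hSclosed.isCompact.image f.continuous).isClosed
  apply Set.Subset.antisymm
  · apply Set.sInter_subset_of_mem
    refine ⟨himage_closed, ?_⟩
    intro ψ₁ ψ₂ h
    exact hPart1 (ψ₁.comp f) (ψ₂.comp f)
      (fun x hx => h (f x) (Set.mem_image_of_mem f hx))
  · rw [Set.image_subset_iff]
    have hν1 : IPMSupportedOn (IPMmap f μ) (IPMsupport (IPMmap f μ)) := ipm_supported_supp hν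
    have hνclosed : IsClosed (IPMsupport (IPMmap f μ)) := isClosed_sInter fun F hF => hF.1
    exact Set.sInter_subset_of_mem ⟨hνclosed.preimage f.continuous, ipm_key f hμ hνclosed hν1⟩
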